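/- Let P be the boundary of a compact convex polygon in ℝ² with nonempty interior. Then the polygonal diameter of the exterior of P (the unbounded component of ℝ² \ P) equals 2: any two exterior points can be joined by a polygonal path of at most 2 segments within ext P, and there exist exterior points not joined by a single segment in ext P. -/

import Mathlib

open Set Metric Bornology

abbrev Plane := EuclideanSpace ℝ (Fin 2)

/-- The `i`-th edge of the closed polygon with vertex cycle `p`. -/
def polyEdge {n : ℕ} (p : ZMod n → Plane) (i : ZMod n) : Set Plane :=
  segment ℝ (p i) (p (i + 1))

/-- The union of the edges of the closed polygon with vertex cycle `p`. -/
def polyBody {n : ℕ} (p : ZMod n → Plane) : Set Plane :=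
  ⋃ i, polyEdge p i

/-- `p` is the vertex cycle of a simple closed `n`-gon: distinct vertices,
consecutive edges meet exactly in their common endpoint, non-consecutive edges
are disjoint. -/
structure IsSimplePolygon {n : ℕ} (p : ZMod n → Plane) : Prop where
  three_le : 3 ≤ n
  inj : Function.Injective p
  consec : ∀ i : ZMod n, polyEdge p i ∩ polyEdge p (i + 1) = {p (i + 1)}
  nonconsec : ∀ i j : ZMod n, j ≠ i → j ≠ i + 1 → i ≠ j + 1 →
    polyEdge p i ∩ polyEdge p j = ∅

/-- The union of the bounded connected components of the complement of `P`
(the Jordan interior of `P`). -/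
def intP (P : Set Plane) : Set Plane :=
  {x | x ∉ P ∧ Bornology.IsBounded (connectedComponentIn Pᶜ x)}

/-- The union of the unbounded connected components of the complement of `P`
(the Jordan exterior of `P`). -/
def extP (P : Set Plane) : Set Plane :=
  {x | x ∉ P ∧ ¬ Bornology.IsBounded (connectedComponentIn Pᶜ x)}

/-- There is a polygonal path of `k` segments from `a` to `b` inside `S`. -/
def PolyPath (S : Set Plane) (a b : Plane) (k : ℕ) : Prop :=
  ∃ x : Fin (k + 1) → Plane, x 0 = a ∧ x (Fin.last k) = b ∧
    ∀ i : Fin k, segment ℝ (x i.castSucc) (x i.succ) ⊆ S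

/-- The minimal number of segments of a polygonal path from `a` to `b` in `S`. -/
noncomputable def polyDist (S : Set Plane) (a b : Plane) : ℕ :=
  sInf {k | PolyPath S a b k}

lemma seg_half (f : Plane →L[ℝ] ℝ) {u : ℝ} {x y : Plane}
    (hx : u < f x) (hy : u < f y) : ∀ z ∈ segment ℝ x y, u < f z := by
  rintro z ⟨s, r, hs, hr, hsr, rfl⟩
  simp only [map_add, map_smul, smul_eq_mul]
  rcases eq_or_lt_of_le hs with h | h
  · have hr1 : r = 1 := by linarith
    rw [← h, hr1]; simpa using hy
  · have e : u = s * u + r * u := by rw [← add_mul, hsr, one_mul]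
    nlinarith [mul_pos h (sub_pos.mpr hx), mul_nonneg hr (sub_nonneg.mpr (le_of_lt hy))]

set_option maxHeartbeats 1000000 in
lemma exists_two_seg (K : Set Plane) (hconv : Convex ℝ K) (hcl : IsClosed K)
    (hbdd : IsBounded K) (hne : K.Nonempty) {a b : Plane}
    (ha : a ∉ K) (hb : b ∉ K) :
    ∃ c, segment ℝ a c ⊆ Kᶜ ∧ segment ℝ c b ⊆ Kᶜ := by
  obtain ⟨f, u, hfK, hfa⟩ := geometric_hahn_banach_closed_point hconv hcl ha
  obtain ⟨g, v, hgK, hgb⟩ := geometric_hahn_banach_closed_point hconv hcl hb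
  by_cases hw : ∃ w, 0 < f w ∧ 0 < g w
  · obtain ⟨w, hfw, hgw⟩ := hw
    obtain ⟨t, htpos, htq⟩ : ∃ t : ℝ, 0 < t ∧ (v - g a) / g w < t := by
      refine ⟨max 0 ((v - g a) / g w) + 1, ?_, ?_⟩
      · have h1 := le_max_left 0 ((v - g a) / g w)
        linarith
      · have h2 := le_max_right 0 ((v - g a) / g w)
        linarith
    refine ⟨a + t • w, ?_, ?_⟩
    · intro z hz
      have hfc : u < f (a + t • w) := by
        simp only [map_add, map_smul, smul_eq_mul]; nlinarith
      have := seg_half f hfa hfc z hz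
      intro hzK; exact absurd (hfK z hzK) (by linarith)
    · intro z hz
      have hgc : v < g (a + t • w) := by
        simp only [map_add, map_smul, smul_eq_mul]
        have : (v - g a) / g w * g w < t * g w := by
          exact mul_lt_mul_of_pos_right htq hgw
        rw [div_mul_cancel₀ _ (ne_of_gt hgw)] at this
        linarith
      have := seg_half g hgc hgb z hz
      intro hzK; exact absurd (hgK z hzK) (by linarith)
  · push_neg at hw
    obtain ⟨y0, hy0⟩ := hne
    set w0 : Plane := a - y0 with hw0def
    have hfw0 : 0 < f w0 := by
      have := hfK y0 hy0
      simp only [hw0def, map_sub]; linarith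
    have hgw0 : g w0 ≤ 0 := hw _ hfw0
    -- kernel of f is in kernel of g
    have hker : ∀ z : Plane, f z = 0 → g z = 0 := by
      intro z hz
      have key : ∀ δ : ℝ, 0 < δ → g z + δ * g w0 ≤ 0 := by
        intro δ hδ
        have h1 : 0 < f (z + δ • w0) := by
          simp only [map_add, map_smul, smul_eq_mul, hz]; nlinarith
        have := hw _ h1
        simpa [map_add, map_smul, smul_eq_mul] using this
      have key' : ∀ δ : ℝ, 0 < δ → -g z + δ * g w0 ≤ 0 := by
        intro δ hδ
        have h1 : 0 < f (-z + δ • w0) := by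
          simp only [map_add, map_neg, map_smul, smul_eq_mul, hz]; nlinarith
        have := hw _ h1
        simpa [map_add, map_neg, map_smul, smul_eq_mul] using this
      by_contra hgz
      have habs : -(|g w0|) ≤ g w0 := neg_abs_le _
      have h0 : (0:ℝ) ≤ |g w0| := abs_nonneg _
      rcases lt_or_gt_of_ne hgz with h | h
      · set β : ℝ := -g z / (2 * (|g w0| + 1)) with hβdef
        have hβ : 0 < β := div_pos (by linarith) (by positivity)
        have hmul : β * (2 * (|g w0| + 1)) = -g z :=
          div_mul_cancel₀ _ (ne_of_gt (by positivity))
        have hba : β * -(|g w0|) ≤ β * g w0 := mul_le_mul_of_nonneg_left habs hβ.le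
        have hk := key' β hβ
        nlinarith [mul_nonneg hβ.le h0]
      · set β : ℝ := g z / (2 * (|g w0| + 1)) with hβdef
        have hβ : 0 < β := div_pos (by linarith) (by positivity)
        have hmul : β * (2 * (|g w0| + 1)) = g z :=
          div_mul_cancel₀ _ (ne_of_gt (by positivity))
        have hba : β * -(|g w0|) ≤ β * g w0 := mul_le_mul_of_nonneg_left habs hβ.le
        have hk := key β hβ
        nlinarith [mul_nonneg hβ.le h0]
    -- g = c0 • f
    set c0 : ℝ := g w0 / f w0 with hc0def
    have hgf : ∀ z : Plane, g z = c0 * f z := by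
      intro z
      have hfz : f (z - (f z / f w0) • w0) = 0 := by
        simp only [map_sub, map_smul, smul_eq_mul]
        field_simp
        ring
      have := hker _ hfz
      simp only [map_sub, map_smul, smul_eq_mul] at this
      have hne0 : f w0 ≠ 0 := ne_of_gt hfw0
      field_simp [hc0def] at this ⊢
      rw [hc0def, eq_comm, mul_div_assoc', div_eq_iff hne0]
      linarith [this]
    have hc0 : c0 < 0 := by
      rcases lt_or_eq_of_le (div_nonpos_of_nonpos_of_nonneg hgw0 (le_of_lt hfw0)) with h | h
      · exact h
      · exfalso
        have hc00 : c0 = 0 := by rw [hc0def]; exact h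
        have h1 := hgK y0 hy0
        have h2 := hgb
        rw [hgf y0, hc00, zero_mul] at h1
        rw [hgf b, hc00, zero_mul] at h2
        linarith
    set m : ℝ := v / c0 with hmdef
    clear_value m
    have hKm : ∀ y ∈ K, m < f y := by
      intro y hy
      have := hgK y hy
      rw [hgf y] at this
      rw [hmdef, div_lt_iff_of_neg hc0]
      linarith [this]
    have hfb : f b < m := by
      rw [hgf b] at hgb
      rw [hmdef, lt_div_iff_of_neg hc0]
      linarith
    have hmu : m < u := by
      have := hKm y0 hy0; have := hfK y0 hy0; linarith
    -- a nonzero kernel vector of f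
    have hkerne : LinearMap.ker (f : Plane →ₗ[ℝ] ℝ) ≠ ⊥ := by
      intro h
      have hinj : Function.Injective (f : Plane →ₗ[ℝ] ℝ) := LinearMap.ker_eq_bot.mp h
      have := LinearMap.finrank_le_finrank_of_injective hinj
      simp [finrank_euclideanSpace_fin] at this
    obtain ⟨w, hwker, hwne⟩ := Submodule.exists_mem_ne_zero_of_ne_bot hkerne
    have hfw : f w = 0 := hwker
    have hwpos : 0 < ‖w‖ := norm_pos_iff.mpr hwne
    obtain ⟨R, hRK⟩ := hbdd.subset_closedBall 0
    have hRnn : 0 ≤ R := by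
      have := hRK hy0; rw [mem_closedBall, dist_zero_right] at this
      exact le_trans (norm_nonneg _) this
    have hKR : ∀ y ∈ K, ‖y‖ ≤ R := by
      intro y hy; have := hRK hy; rwa [mem_closedBall, dist_zero_right] at this
    set s2 : ℝ := (f a - m) / (f a - f b) with hs2def
    clear_value s2
    have hD : 0 < f a - f b := by linarith
    have hs2pos : 0 < s2 := by
      rw [hs2def]; apply div_pos; linarith; exact hD
    have hs2lt : s2 < 1 := by
      rw [hs2def, div_lt_one hD]; linarith
    have h1s2 : 0 < 1 - s2 := by linarith
    set t : ℝ := (‖a‖ + (R + ‖b‖ + 1) / (1 - s2) + 1) / ‖w‖ with htdef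
    clear_value t
    have htw : t * ‖w‖ = ‖a‖ + (R + ‖b‖ + 1) / (1 - s2) + 1 := by
      rw [htdef, div_mul_cancel₀ _ (ne_of_gt hwpos)]
    have htpos : 0 < t := by
      rw [htdef]
      apply div_pos _ hwpos
      have h3 : 0 < (R + ‖b‖ + 1) / (1 - s2) :=
        div_pos (by linarith [norm_nonneg b]) h1s2
      linarith [norm_nonneg a]
    set c : Plane := a + t • w with hcdef
    clear_value c
    have hfc : f c = f a := by
      rw [hcdef, map_add, map_smul, hfw, smul_zero, add_zero]
    have hnc : ‖a‖ + (R + ‖b‖ + 1) / (1 - s2) + 1 - ‖a‖ ≤ ‖c‖ := by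
      have h1 : ‖t • w‖ - ‖a‖ ≤ ‖c‖ := by
        have := norm_sub_norm_le (t • w) (-a)
        simpa [hcdef, sub_neg_eq_add, add_comm] using this
      have h2 : ‖t • w‖ = t * ‖w‖ := by
        rw [norm_smul, Real.norm_eq_abs, abs_of_pos htpos]
      rw [h2, htw] at h1; linarith
    refine ⟨c, ?_, ?_⟩
    · intro z hz
      have hfc' : u < f c := by rw [hfc]; exact hfa
      have := seg_half f hfa hfc' z hz
      intro hzK; exact absurd (hfK z hzK) (by linarith)
    · rintro z ⟨s', s, hs', hs, hsum, rfl⟩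
      intro hzK
      have hfz : f (s' • c + s • b) = s' * f a + s * f b := by
        rw [map_add, map_smul, map_smul, hfc, smul_eq_mul, smul_eq_mul]
      have hmz := hKm _ hzK
      rw [hfz] at hmz
      -- deduce s < s2
      have hslt : s < s2 := by
        have hs'eq : s' = 1 - s := by linarith
        rw [hs'eq] at hmz
        rw [hs2def, lt_div_iff₀ hD]
        nlinarith
      have hnorm : ‖s' • c + s • b‖ ≤ R := hKR _ hzK
      have hlow : s' * ‖c‖ - s * ‖b‖ ≤ ‖s' • c + s • b‖ := by
        have := norm_sub_norm_le (s' • c) (-(s • b))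
        have e1 : ‖s' • c‖ = s' * ‖c‖ := by
          rw [norm_smul, Real.norm_eq_abs, abs_of_nonneg hs']
        have e2 : ‖-(s • b)‖ = s * ‖b‖ := by
          rw [norm_neg, norm_smul, Real.norm_eq_abs, abs_of_nonneg hs]
        rw [e1, e2] at this
        simpa [sub_neg_eq_add] using this
      have hcge : (R + ‖b‖ + 1) / (1 - s2) + 1 ≤ ‖c‖ := by linarith
      have hcpos : 0 ≤ ‖c‖ := norm_nonneg _
      have hs'gt : 1 - s2 < s' := by linarith
      have hkey : (1 - s2) * ((R + ‖b‖ + 1) / (1 - s2)) = R + ‖b‖ + 1 := by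
        field_simp
      nlinarith [norm_nonneg b, mul_le_mul_of_nonneg_left hcge (le_of_lt h1s2),
        mul_le_mul_of_nonneg_right (le_of_lt hs'gt) hcpos, hs.trans (le_of_lt hslt)]


lemma joined_of_seg {S : Set Plane} {x y : Plane} (h : segment ℝ x y ⊆ S) :
    JoinedIn S x y :=
  (((convex_segment x y).isPathConnected ⟨x, left_mem_segment ℝ x y⟩).joinedIn
    x (left_mem_segment ℝ x y) y (right_mem_segment ℝ x y)).mono h

theorem stmt12 {n : ℕ} (p : ZMod n → Plane) (hP : IsSimplePolygon p)
    (hKi : (interior (convexHull ℝ (Set.range p))).Nonempty)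
    (hfr : polyBody p = frontier (convexHull ℝ (Set.range p))) :
    (∀ a ∈ extP (polyBody p), ∀ b ∈ extP (polyBody p),
      ∃ k ≤ 2, PolyPath (extP (polyBody p)) a b k) ∧
    ∃ a ∈ extP (polyBody p), ∃ b ∈ extP (polyBody p),
      ¬ segment ℝ a b ⊆ extP (polyBody p) := by
  haveI : NeZero n := ⟨by have := hP.three_le; omega⟩
  set K : Set Plane := convexHull ℝ (Set.range p) with hKdef
  have hKc : IsCompact K := (Set.finite_range p).isCompact_convexHull ℝ
  have hconv : Convex ℝ K := convex_convexHull ℝ _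
  have hcl : IsClosed K := hKc.isClosed
  have hbdd : Bornology.IsBounded K := hKc.isBounded
  obtain ⟨x0, hx0⟩ := hKi
  have hne : K.Nonempty := ⟨x0, interior_subset hx0⟩
  have hcompl : (polyBody p)ᶜ = interior K ∪ Kᶜ := by
    rw [hfr, hcl.frontier_eq]
    ext z
    simp only [Set.mem_compl_iff, Set.mem_diff, Set.mem_union, not_and, not_not]
    constructor
    · intro h
      by_cases hz : z ∈ K
      · exact Or.inl (h hz)
      · exact Or.inr hz
    · rintro (h | h) hzK
      · exact h
      · exact absurd hzK h
  -- exterior points characterization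
  obtain ⟨R, hRK⟩ := hbdd.subset_closedBall 0
  have hRnn : 0 ≤ R := by
    have := hRK (interior_subset hx0)
    rw [Metric.mem_closedBall, dist_zero_right] at this
    exact le_trans (norm_nonneg _) this
  have hKcne : Kᶜ.Nonempty := by
    refine ⟨EuclideanSpace.single (0 : Fin 2) (R + 1), fun hmem => ?_⟩
    have := hRK hmem
    rw [Metric.mem_closedBall, dist_zero_right, EuclideanSpace.norm_single,
      Real.norm_eq_abs, abs_of_pos (by linarith)] at this
    linarith
  have hpath : IsPathConnected Kᶜ := by
    obtain ⟨z0, hz0⟩ := hKcne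
    refine ⟨z0, hz0, fun {y} hy => ?_⟩
    obtain ⟨c, h1, h2⟩ := exists_two_seg K hconv hcl hbdd hne hz0 hy
    exact (joined_of_seg h1).trans (joined_of_seg h2)
  have hKcunb : ¬ Bornology.IsBounded Kᶜ := by
    intro hB
    obtain ⟨R', hR'⟩ := hB.subset_closedBall 0
    set r : ℝ := max R R' with hrdef
    have hr0 : 0 ≤ r := le_trans hRnn (le_max_left _ _)
    have : ∀ z : Plane, ‖z‖ ≤ r := by
      intro z
      by_cases hz : z ∈ K
      · have := hRK hz
        rw [Metric.mem_closedBall, dist_zero_right] at this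
        exact le_trans this (le_max_left _ _)
      · have := hR' hz
        rw [Metric.mem_closedBall, dist_zero_right] at this
        exact le_trans this (le_max_right _ _)
    have h1 := this (EuclideanSpace.single (0 : Fin 2) (r + 1))
    rw [EuclideanSpace.norm_single, Real.norm_eq_abs, abs_of_pos (by linarith)] at h1
    linarith
  have hext : extP (polyBody p) = Kᶜ := by
    ext z
    constructor
    · rintro ⟨hzP, hzu⟩
      by_contra hzK
      rw [Set.notMem_compl_iff] at hzK
      have hzint : z ∈ interior K := by
        have : z ∉ frontier K := by rwa [← hfr]
        rw [hcl.frontier_eq] at this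
        simp only [Set.mem_diff, not_and, not_not] at this
        exact this hzK
      have hzPc : z ∈ (polyBody p)ᶜ := hzP
      have hsub : connectedComponentIn (polyBody p)ᶜ z ⊆ interior K := by
        apply IsPreconnected.subset_left_of_subset_union isOpen_interior
          hcl.isOpen_compl
        · exact (disjoint_compl_right (a := K)).mono_left interior_subset
        · exact (connectedComponentIn_subset _ _).trans hcompl.subset
        · exact ⟨z, mem_connectedComponentIn hzPc, hzint⟩
        · exact isPreconnected_connectedComponentIn
      exact hzu ((hbdd.subset interior_subset).subset hsub)
    · intro hzK
      have hzP : z ∉ polyBody p := by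
        rw [hfr]
        intro hzf
        exact hzK (hcl.frontier_subset hzf)
      refine ⟨hzP, fun hB => ?_⟩
      have hsub : Kᶜ ⊆ connectedComponentIn (polyBody p)ᶜ z := by
        apply IsPreconnected.subset_connectedComponentIn
          hpath.isConnected.isPreconnected hzK
        rw [hcompl]
        exact Set.subset_union_right
      exact hKcunb (hB.subset hsub)
  constructor
  · intro a ha b hb
    rw [hext] at ha hb
    obtain ⟨c, h1, h2⟩ := exists_two_seg K hconv hcl hbdd hne ha hb
    refine ⟨2, le_refl 2, ![a, c, b], rfl, rfl, ?_⟩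
    intro i
    rw [hext]
    fin_cases i
    · simpa using h1
    · simpa using h2
  · set e : Plane := EuclideanSpace.single (0 : Fin 2) (1 : ℝ) with hedef
    have hnorme : ‖e‖ = 1 := by
      rw [hedef, EuclideanSpace.norm_single, Real.norm_eq_abs, abs_one]
    have houtside : ∀ z : Plane, dist z x0 > 2 * R → z ∉ K := by
      intro z hz hzK
      have := hRK hzK
      rw [Metric.mem_closedBall, dist_zero_right] at this
      have h2 := hRK (interior_subset hx0)
      rw [Metric.mem_closedBall, dist_zero_right] at h2
      have := dist_le_norm_add_norm z x0
      linarith [hz]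
    set a : Plane := x0 + (2 * R + 1) • e with hadef
    set b : Plane := x0 - (2 * R + 1) • e with hbdef
    have hda : dist a x0 = 2 * R + 1 := by
      rw [hadef, dist_self_add_left, norm_smul, Real.norm_eq_abs,
        abs_of_pos (by linarith), hnorme, mul_one]
    have hdb : dist b x0 = 2 * R + 1 := by
      rw [hbdef, sub_eq_add_neg, dist_self_add_left, norm_neg, norm_smul,
        Real.norm_eq_abs, abs_of_pos (by linarith), hnorme, mul_one]
    have haK : a ∉ K := houtside a (by rw [hda]; linarith)
    have hbK : b ∉ K := houtside b (by rw [hdb]; linarith)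
    refine ⟨a, ?_, b, ?_, ?_⟩
    · rw [hext]; exact haK
    · rw [hext]; exact hbK
    · intro hsub
      have hx0seg : x0 ∈ segment ℝ a b := by
        refine ⟨1/2, 1/2, by norm_num, by norm_num, by norm_num, ?_⟩
        rw [hadef, hbdef]
        module
      have := hsub hx0seg
      rw [hext] at this
      exact this (interior_subset hx0)
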